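/- Let λ be a real number with λ > 1. Then √((17λ − 1)/(λ − 1)) is an odd positive integer if and only if there exists a natural number p ≥ 2 such that λ = 1 + 4/(p² + p − 4). Equivalently, with e₃ = √(17λ − 1)/(2√(λ − 1)), the number e₃ is a half-odd integer (i.e. 2e₃ is an odd integer) exactly for λ = 1 + 4/(p² + p − 4), p ∈ ℕ, p ≥ 2. -/

import Mathlib

theorem kimura_condition_mass_ratio (lam : ℝ) (hlam : 1 < lam) :
    ((∃ n : ℕ, Odd n ∧ 0 < n ∧ Real.sqrt ((17 * lam - 1) / (lam - 1)) = n) ↔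
      (∃ p : ℕ, 2 ≤ p ∧ lam = 1 + 4 / ((p : ℝ) ^ 2 + (p : ℝ) - 4))) ∧
    ((∃ m : ℤ, Odd m ∧
        2 * (Real.sqrt (17 * lam - 1) / (2 * Real.sqrt (lam - 1))) = (m : ℝ)) ↔
      (∃ p : ℕ, 2 ≤ p ∧ lam = 1 + 4 / ((p : ℝ) ^ 2 + (p : ℝ) - 4))) := by
  have hB : (0:ℝ) < lam - 1 := by linarith
  have hA : (0:ℝ) < 17 * lam - 1 := by linarith
  have hr : (0:ℝ) ≤ (17 * lam - 1) / (lam - 1) := le_of_lt (div_pos hA hB)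
  have hr17 : (17:ℝ) < (17 * lam - 1) / (lam - 1) := by
    rw [lt_div_iff₀ hB]; linarith
  have key : (∃ n : ℕ, Odd n ∧ 0 < n ∧ Real.sqrt ((17 * lam - 1) / (lam - 1)) = n) ↔
      (∃ p : ℕ, 2 ≤ p ∧ lam = 1 + 4 / ((p : ℝ) ^ 2 + (p : ℝ) - 4)) := by
    constructor
    · rintro ⟨n, hodd, hpos, hs⟩
      have hsq : ((n:ℝ))^2 = (17 * lam - 1) / (lam - 1) := by
        rw [← hs, Real.sq_sqrt hr]
      have hn5 : 5 ≤ n := by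
        by_contra h
        push_neg at h
        have : (n:ℝ) ≤ 4 := by exact_mod_cast Nat.lt_succ_iff.mp h
        nlinarith
      obtain ⟨p, hp⟩ := hodd
      subst hp
      refine ⟨p, by omega, ?_⟩
      have hD : (0:ℝ) < (p:ℝ)^2 + (p:ℝ) - 4 := by
        have : (2:ℝ) ≤ (p:ℝ) := by exact_mod_cast (by omega : 2 ≤ p)
        nlinarith
      have heq : ((2*(p:ℝ)+1))^2 * (lam - 1) = 17 * lam - 1 := by
        have := hsq
        push_cast at this
        field_simp at this
        linarith [this]
      rw [eq_comm, ← eq_sub_iff_add_eq', div_eq_iff hD.ne']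
      linear_combination (-1/4 : ℝ) * heq
    · rintro ⟨p, hp, hlameq⟩
      have hD : (0:ℝ) < (p:ℝ)^2 + (p:ℝ) - 4 := by
        have : (2:ℝ) ≤ (p:ℝ) := by exact_mod_cast hp
        nlinarith
      refine ⟨2*p+1, ⟨p, by ring⟩, by omega, ?_⟩
      have hrval : (17 * lam - 1) / (lam - 1) = ((2*(p:ℝ)+1))^2 := by
        rw [hlameq]
        rw [div_eq_iff (by rw [add_sub_cancel_left]; positivity)]
        have h4 : 4 / ((p:ℝ)^2 + (p:ℝ) - 4) * ((p:ℝ)^2 + (p:ℝ) - 4) = 4 := div_mul_cancel₀ _ hD.ne'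
        linear_combination (-4 : ℝ) * h4
      rw [hrval]
      have : (0:ℝ) ≤ 2*(p:ℝ)+1 := by positivity
      rw [Real.sqrt_sq this]
      push_cast; ring
  constructor
  · exact key
  · rw [← key]
    have hdiv : 2 * (Real.sqrt (17 * lam - 1) / (2 * Real.sqrt (lam - 1))) =
        Real.sqrt ((17 * lam - 1) / (lam - 1)) := by
      rw [Real.sqrt_div hA.le]
      ring
    rw [hdiv]
    have hgt4 : (4:ℝ) < Real.sqrt ((17 * lam - 1) / (lam - 1)) := by
      rw [show (4:ℝ) = Real.sqrt 16 by
        rw [show (16:ℝ) = 4^2 by norm_num, Real.sqrt_sq (by norm_num : (0:ℝ) ≤ 4)]]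
      exact Real.sqrt_lt_sqrt (by norm_num) (by linarith)
    constructor
    · rintro ⟨m, ⟨k, hk⟩, hm⟩
      have hmpos : 0 < m := by
        have : (0:ℝ) < (m:ℝ) := by linarith
        exact_mod_cast this
      have hk0 : 0 ≤ k := by omega
      refine ⟨(2*k+1).toNat, ?_, by omega, ?_⟩
      · refine ⟨k.toNat, ?_⟩; omega
      · rw [hm, hk]
        exact_mod_cast (Int.toNat_of_nonneg (by omega : 0 ≤ 2*k+1)).symm
    · rintro ⟨n, hodd, hpos, hs⟩
      exact ⟨n, Int.odd_coe_nat n |>.mpr hodd, by rw [hs]; push_cast; ring⟩
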